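/- Let n ≥ 1 be an integer and B > 0, and let J ⊆ ℝ^n be a finite nonempty set with r = max_{x ∈ J} ‖x‖ (Euclidean norm). On a probability space, let σ_1, …, σ_n, w_1, …, w_n be mutually independent random variables such that each σ_i is uniform on {−1, 1} (Rademacher) and each w_i takes values in [−B, B] almost surely. Then E[ max_{x ∈ J} Σ_{i=1}^n σ_i · x_i · w_i ] ≤ r B √(2 log |J|). -/

import Mathlib

open Matrix MeasureTheory ProbabilityTheory ENNReal

set_option linter.unusedSectionVars false
set_option linter.unusedVariables false
set_option linter.deprecated false


section Aux

variable {Ω : Type*} [MeasurableSpace Ω] {P : Measure Ω} [IsProbabilityMeasure P]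

lemma wm_integrable_of_ae_bdd {f : Ω → ℝ} (hf : Measurable f) {C : ℝ}
    (h : ∀ᵐ ω ∂P, |f ω| ≤ C) : Integrable f P :=
  Integrable.mono' (integrable_const C) hf.aestronglyMeasurable
    (by simpa [Real.norm_eq_abs] using h)

lemma wm_rad_ae {g : Ω → ℝ} (hm : Measurable g)
    (h : P.map g = ((1 : ℝ≥0∞) / 2) • Measure.dirac (1 : ℝ)
        + ((1 : ℝ≥0∞) / 2) • Measure.dirac (-1 : ℝ)) :
    ∀ᵐ ω ∂P, g ω = 1 ∨ g ω = -1 := by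
  have hs : MeasurableSet ({1, -1}ᶜ : Set ℝ) := (measurableSet_insert.2 (measurableSet_singleton _)).compl
  have h0 : P (g ⁻¹' ({1, -1}ᶜ : Set ℝ)) = 0 := by
    rw [← Measure.map_apply hm hs, h]
    simp [Measure.dirac_apply' _ hs, Set.indicator]
  have hset : {ω | ¬(g ω = 1 ∨ g ω = -1)} = g ⁻¹' ({1, -1}ᶜ : Set ℝ) := by
    ext ω; simp [not_or]
  rw [ae_iff, hset]
  exact h0

lemma wm_rad_integral {g : Ω → ℝ} (hm : Measurable g)
    (h : P.map g = ((1 : ℝ≥0∞) / 2) • Measure.dirac (1 : ℝ)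
        + ((1 : ℝ≥0∞) / 2) • Measure.dirac (-1 : ℝ)) :
    ∫ ω, g ω ∂P = 0 := by
  have hid : Integrable (fun x : ℝ => x) (Measure.dirac (1 : ℝ)) := by
    refine ⟨measurable_id.aestronglyMeasurable, ?_⟩
    simp [HasFiniteIntegral, lintegral_dirac]
  have hid' : Integrable (fun x : ℝ => x) (Measure.dirac (-1 : ℝ)) := by
    refine ⟨measurable_id.aestronglyMeasurable, ?_⟩
    simp [HasFiniteIntegral, lintegral_dirac]
  have : ∫ ω, g ω ∂P = ∫ x, x ∂(P.map g) :=
    (integral_map hm.aemeasurable measurable_id.aestronglyMeasurable).symm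
  rw [this, h, integral_add_measure (hid.smul_measure (by norm_num))
    (hid'.smul_measure (by norm_num))]
  rw [integral_smul_measure, integral_smul_measure, integral_dirac, integral_dirac]
  norm_num

lemma wm_opt_t {a b c : ℝ} (ha : 0 ≤ a) (hb : 0 ≤ b)
    (h : ∀ t : ℝ, 0 < t → c ≤ a / t + t * b / 2) : c ≤ Real.sqrt (2 * a * b) := by
  have hc0 : (0 : ℝ) ≤ Real.sqrt (2 * a * b) := Real.sqrt_nonneg _
  rcases eq_or_lt_of_le ha with ha0 | ha0
  · -- a = 0
    refine le_trans ?_ hc0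
    by_contra hc
    push_neg at hc
    rcases eq_or_lt_of_le hb with hb0 | hb0
    · have := h 1 one_pos; rw [← ha0, ← hb0] at this; norm_num at this; linarith
    · have := h (c / b) (div_pos hc hb0)
      rw [← ha0] at this
      rw [zero_div, zero_add, div_mul_eq_mul_div, mul_div_assoc, div_self (ne_of_gt hb0)] at this
      linarith
  rcases eq_or_lt_of_le hb with hb0 | hb0
  · -- b = 0
    refine le_trans ?_ hc0
    by_contra hc
    push_neg at hc
    have := h (2 * a / c) (by positivity)
    rw [← hb0] at this
    have h2 : a / (2 * a / c) = c / 2 := by field_simp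
    rw [h2] at this; linarith
  · set s := Real.sqrt (2 * a * b) with hs
    have hs0 : 0 < s := Real.sqrt_pos.2 (by positivity)
    have hs2 : s ^ 2 = 2 * a * b := Real.sq_sqrt (by positivity)
    have := h (s / b) (div_pos hs0 hb0)
    have heq : a / (s / b) + (s / b) * b / 2 = s := by
      rw [div_div_eq_mul_div, div_mul_cancel₀ _ (ne_of_gt hb0)]
      field_simp
      nlinarith [hs2]
    linarith [heq ▸ this]

end Aux

lemma wm_prod_mgf {n : ℕ} {B : ℝ} (hB : 0 < B)
    {Ω : Type*} [MeasurableSpace Ω] {P : Measure Ω} [IsProbabilityMeasure P]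
    (σ w : Fin n → Ω → ℝ)
    (hσm : ∀ i, Measurable (σ i)) (hwm : ∀ i, Measurable (w i))
    (hindep : iIndepFun (Sum.elim σ w) P)
    (hσ : ∀ i, P.map (σ i) =
      ((1 : ℝ≥0∞) / 2) • Measure.dirac (1 : ℝ) + ((1 : ℝ≥0∞) / 2) • Measure.dirac (-1 : ℝ))
    (hw : ∀ i, ∀ᵐ ω ∂P, |w i ω| ≤ B) (c : Fin n → ℝ) (s : Finset (Fin n)) :
    ∫ ω, ∏ i ∈ s, Real.exp (σ i ω * c i * w i ω) ∂P
      ≤ ∏ i ∈ s, Real.exp ((c i) ^ 2 * B ^ 2 / 2) := by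
  classical
  have hσae : ∀ᵐ ω ∂P, ∀ i, σ i ω = 1 ∨ σ i ω = -1 :=
    (ae_all_iff).2 fun i => wm_rad_ae (hσm i) (hσ i)
  have hwae : ∀ᵐ ω ∂P, ∀ i, |w i ω| ≤ B := (ae_all_iff).2 hw
  have hfm : ∀ k, Measurable (Sum.elim σ w k) := by rintro (i | i); exacts [hσm i, hwm i]
  induction s using Finset.induction_on with
  | empty => simp
  | @insert j s hj ih =>
    have hRm : Measurable (fun ω => ∏ i ∈ s, Real.exp (σ i ω * c i * w i ω)) :=
      Finset.measurable_prod _ fun i _ =>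
        Real.measurable_exp.comp (((hσm i).mul_const _).mul (hwm i))
    have hRpos : ∀ ω, 0 ≤ ∏ i ∈ s, Real.exp (σ i ω * c i * w i ω) :=
      fun ω => Finset.prod_nonneg fun i _ => (Real.exp_pos _).le
    have hFb : ∀ᵐ ω ∂P, ∀ i, |Real.exp (σ i ω * c i * w i ω)| ≤ Real.exp (|c i| * B) := by
      filter_upwards [hσae, hwae] with ω h1 h2
      intro i
      have hs1 : |σ i ω| = 1 := by rcases h1 i with h | h <;> simp [h]
      rw [abs_of_pos (Real.exp_pos _)]
      apply Real.exp_le_exp.2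
      calc σ i ω * c i * w i ω ≤ |σ i ω * c i * w i ω| := le_abs_self _
        _ = |c i| * |w i ω| := by rw [abs_mul, abs_mul, hs1, one_mul]
        _ ≤ |c i| * B := mul_le_mul_of_nonneg_left (h2 i) (abs_nonneg _)
    have hRb : ∀ᵐ ω ∂P, |∏ i ∈ s, Real.exp (σ i ω * c i * w i ω)| ≤ ∏ i ∈ s, Real.exp (|c i| * B) := by
      filter_upwards [hFb] with ω h
      calc |∏ i ∈ s, Real.exp (σ i ω * c i * w i ω)|
          = ∏ i ∈ s, |Real.exp (σ i ω * c i * w i ω)| := Finset.abs_prod _ _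
        _ ≤ ∏ i ∈ s, Real.exp (|c i| * B) :=
            Finset.prod_le_prod (fun i _ => abs_nonneg _) (fun i _ => h i)
    have hRint : Integrable (fun ω => ∏ i ∈ s, Real.exp (σ i ω * c i * w i ω)) P :=
      wm_integrable_of_ae_bdd hRm hRb
    have hcwb : ∀ᵐ ω ∂P, |c j * w j ω| ≤ |c j| * B := by
      filter_upwards [hw j] with ω h2
      rw [abs_mul]
      exact mul_le_mul_of_nonneg_left h2 (abs_nonneg _)
    have hcoshRint : Integrable (fun ω => Real.cosh (c j * w j ω) * ∏ i ∈ s, Real.exp (σ i ω * c i * w i ω)) P := by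
      have hcoshm : Measurable (fun ω => Real.cosh (c j * w j ω) * ∏ i ∈ s, Real.exp (σ i ω * c i * w i ω)) :=
        (Real.measurable_cosh.comp ((hwm j).const_mul _)).mul hRm
      apply wm_integrable_of_ae_bdd hcoshm
        (C := Real.cosh (|c j| * B) * ∏ i ∈ s, Real.exp (|c i| * B))
      filter_upwards [hRb, hcwb] with ω h1 h2
      rw [abs_mul, abs_of_pos (Real.cosh_pos _)]
      refine mul_le_mul ?_ h1 (abs_nonneg _) (Real.cosh_pos _).le
      apply Real.cosh_le_cosh.2
      rwa [abs_of_nonneg (by positivity : (0:ℝ) ≤ |c j| * B)]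
    have hGm : Measurable (fun ω => Real.sinh (c j * w j ω) * ∏ i ∈ s, Real.exp (σ i ω * c i * w i ω)) :=
      (Real.measurable_sinh.comp ((hwm j).const_mul _)).mul hRm
    have hσGint : Integrable (fun ω => σ j ω * (Real.sinh (c j * w j ω) * ∏ i ∈ s, Real.exp (σ i ω * c i * w i ω))) P := by
      apply wm_integrable_of_ae_bdd ((hσm j).mul hGm)
        (C := Real.sinh (|c j| * B) * ∏ i ∈ s, Real.exp (|c i| * B))
      filter_upwards [hRb, hcwb, hσae] with ω h1 h2 h3
      have hs1 : |σ j ω| = 1 := by rcases h3 j with h | h <;> simp [h]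
      simp only [Pi.mul_apply]
      rw [abs_mul, abs_mul, hs1, one_mul]
      refine mul_le_mul ?_ h1 (abs_nonneg _)
        (Real.sinh_nonneg_iff.2 (by positivity))
      rw [Real.abs_sinh]
      exact Real.sinh_le_sinh.2 h2
    -- independence of σ j and the rest
    have hTj : Sum.inr j ∈ (insert (Sum.inr j) (s.image Sum.inl ∪ s.image Sum.inr) : Finset (Fin n ⊕ Fin n)) :=
      Finset.mem_insert_self _ _
    have hTl : ∀ i ∈ s, Sum.inl i ∈ (insert (Sum.inr j) (s.image Sum.inl ∪ s.image Sum.inr) : Finset (Fin n ⊕ Fin n)) :=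
      fun i hi => Finset.mem_insert_of_mem (Finset.mem_union_left _ (Finset.mem_image_of_mem _ hi))
    have hTr : ∀ i ∈ s, Sum.inr i ∈ (insert (Sum.inr j) (s.image Sum.inl ∪ s.image Sum.inr) : Finset (Fin n ⊕ Fin n)) :=
      fun i hi => Finset.mem_insert_of_mem (Finset.mem_union_right _ (Finset.mem_image_of_mem _ hi))
    have hdisj : Disjoint ({Sum.inl j} : Finset (Fin n ⊕ Fin n))
        (insert (Sum.inr j) (s.image Sum.inl ∪ s.image Sum.inr)) := by
      rw [Finset.disjoint_singleton_left]
      simp only [Finset.mem_insert, Finset.mem_union, Finset.mem_image, not_or]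
      refine ⟨by simp, ?_, ?_⟩
      · rintro ⟨i, hi, hEq⟩
        rw [Sum.inl.injEq] at hEq
        exact hj (hEq ▸ hi)
      · rintro ⟨i, hi, hEq⟩
        cases hEq
    have hIF := hindep.indepFun_finset {Sum.inl j}
      (insert (Sum.inr j) (s.image Sum.inl ∪ s.image Sum.inr)) hdisj hfm
    have hφm : Measurable (fun v : ({Sum.inl j} : Finset (Fin n ⊕ Fin n)) → ℝ =>
        v ⟨Sum.inl j, Finset.mem_singleton_self _⟩) := measurable_pi_apply _
    have hψm : Measurable (fun v : (insert (Sum.inr j) (s.image Sum.inl ∪ s.image Sum.inr) : Finset (Fin n ⊕ Fin n)) → ℝ =>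
        Real.sinh (c j * v ⟨Sum.inr j, hTj⟩) *
          ∏ i ∈ s.attach, Real.exp (v ⟨Sum.inl i.1, hTl i.1 i.2⟩ * c i.1 * v ⟨Sum.inr i.1, hTr i.1 i.2⟩)) := by
      apply Measurable.mul
      · exact Real.measurable_sinh.comp ((measurable_pi_apply _).const_mul _)
      · exact Finset.measurable_prod _ fun i _ =>
          Real.measurable_exp.comp (((measurable_pi_apply _).mul_const _).mul (measurable_pi_apply _))
    have hcomp := hIF.comp hφm hψm
    have hGind : IndepFun (σ j)
        (fun ω => Real.sinh (c j * w j ω) * ∏ i ∈ s, Real.exp (σ i ω * c i * w i ω)) P := by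
      have h1 : ((fun v : ({Sum.inl j} : Finset (Fin n ⊕ Fin n)) → ℝ =>
          v ⟨Sum.inl j, Finset.mem_singleton_self _⟩) ∘
          (fun ω (i : ({Sum.inl j} : Finset (Fin n ⊕ Fin n))) => Sum.elim σ w i ω)) = σ j := rfl
      have h2 : ((fun v : (insert (Sum.inr j) (s.image Sum.inl ∪ s.image Sum.inr) : Finset (Fin n ⊕ Fin n)) → ℝ =>
          Real.sinh (c j * v ⟨Sum.inr j, hTj⟩) *
            ∏ i ∈ s.attach, Real.exp (v ⟨Sum.inl i.1, hTl i.1 i.2⟩ * c i.1 * v ⟨Sum.inr i.1, hTr i.1 i.2⟩)) ∘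
          (fun ω (i : (insert (Sum.inr j) (s.image Sum.inl ∪ s.image Sum.inr) : Finset (Fin n ⊕ Fin n))) => Sum.elim σ w i ω))
          = fun ω => Real.sinh (c j * w j ω) * ∏ i ∈ s, Real.exp (σ i ω * c i * w i ω) := by
        funext ω
        show Real.sinh _ * _ = _
        congr 1
        exact Finset.prod_attach s fun i => Real.exp (σ i ω * c i * w i ω)
      rw [h1, h2] at hcomp
      exact hcomp
    have hzero : ∫ ω, σ j ω * (Real.sinh (c j * w j ω) * ∏ i ∈ s, Real.exp (σ i ω * c i * w i ω)) ∂P = 0 := by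
      rw [IndepFun.integral_fun_mul_eq_mul_integral hGind (hσm j).aestronglyMeasurable hGm.aestronglyMeasurable,
        wm_rad_integral (hσm j) (hσ j), zero_mul]
    have hsplit : ∀ᵐ ω ∂P, ∏ i ∈ insert j s, Real.exp (σ i ω * c i * w i ω)
        = Real.cosh (c j * w j ω) * ∏ i ∈ s, Real.exp (σ i ω * c i * w i ω)
          + σ j ω * (Real.sinh (c j * w j ω) * ∏ i ∈ s, Real.exp (σ i ω * c i * w i ω)) := by
      filter_upwards [hσae] with ω h1
      rw [Finset.prod_insert hj]
      rcases h1 j with h | h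
      · rw [h, one_mul, ← Real.cosh_add_sinh]; ring
      · rw [h]
        have hx : (-1 : ℝ) * c j * w j ω = -(c j * w j ω) := by ring
        rw [hx, ← Real.cosh_sub_sinh]; ring
    have hpt : ∀ᵐ ω ∂P, Real.cosh (c j * w j ω) * ∏ i ∈ s, Real.exp (σ i ω * c i * w i ω)
        ≤ Real.exp ((c j) ^ 2 * B ^ 2 / 2) * ∏ i ∈ s, Real.exp (σ i ω * c i * w i ω) := by
      filter_upwards [hw j] with ω h2
      refine mul_le_mul_of_nonneg_right ?_ (hRpos ω)
      refine (Real.cosh_le_exp_half_sq _).trans (Real.exp_le_exp.2 ?_)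
      have hw2 : (w j ω) ^ 2 ≤ B ^ 2 := by nlinarith [abs_le.1 h2]
      have : (c j * w j ω) ^ 2 ≤ (c j) ^ 2 * B ^ 2 := by
        rw [mul_pow]; exact mul_le_mul_of_nonneg_left hw2 (sq_nonneg _)
      linarith
    calc ∫ ω, ∏ i ∈ insert j s, Real.exp (σ i ω * c i * w i ω) ∂P
        = ∫ ω, (Real.cosh (c j * w j ω) * ∏ i ∈ s, Real.exp (σ i ω * c i * w i ω)
            + σ j ω * (Real.sinh (c j * w j ω) * ∏ i ∈ s, Real.exp (σ i ω * c i * w i ω))) ∂P :=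
          integral_congr_ae hsplit
      _ = ∫ ω, Real.cosh (c j * w j ω) * ∏ i ∈ s, Real.exp (σ i ω * c i * w i ω) ∂P
            + ∫ ω, σ j ω * (Real.sinh (c j * w j ω) * ∏ i ∈ s, Real.exp (σ i ω * c i * w i ω)) ∂P :=
          integral_add hcoshRint hσGint
      _ = ∫ ω, Real.cosh (c j * w j ω) * ∏ i ∈ s, Real.exp (σ i ω * c i * w i ω) ∂P := by
          rw [hzero, add_zero]
      _ ≤ ∫ ω, Real.exp ((c j) ^ 2 * B ^ 2 / 2) * ∏ i ∈ s, Real.exp (σ i ω * c i * w i ω) ∂P :=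
          integral_mono_ae hcoshRint (hRint.const_mul _) hpt
      _ = Real.exp ((c j) ^ 2 * B ^ 2 / 2) * ∫ ω, ∏ i ∈ s, Real.exp (σ i ω * c i * w i ω) ∂P :=
          integral_const_mul _ _
      _ ≤ Real.exp ((c j) ^ 2 * B ^ 2 / 2) * ∏ i ∈ s, Real.exp ((c i) ^ 2 * B ^ 2 / 2) :=
          mul_le_mul_of_nonneg_left ih (Real.exp_pos _).le
      _ = ∏ i ∈ insert j s, Real.exp ((c i) ^ 2 * B ^ 2 / 2) := by rw [Finset.prod_insert hj]

lemma wm_jensen_exp {Ω : Type*} [MeasurableSpace Ω] {P : Measure Ω} [IsProbabilityMeasure P]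
    {f : Ω → ℝ} (hint : Integrable f P) (hexp : Integrable (fun ω => Real.exp (f ω)) P) :
    Real.exp (∫ ω, f ω ∂P) ≤ ∫ ω, Real.exp (f ω) ∂P := by
  set I : ℝ := ∫ ω, f ω ∂P with hIdef
  have hpt : ∀ ω, Real.exp I + Real.exp I * (f ω - I) ≤ Real.exp (f ω) := by
    intro ω
    have h5 := Real.add_one_le_exp (f ω - I)
    have h6 : Real.exp I * ((f ω - I) + 1) ≤ Real.exp I * Real.exp (f ω - I) :=
      mul_le_mul_of_nonneg_left h5 (Real.exp_pos _).le
    rw [← Real.exp_add] at h6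
    have h7 : I + (f ω - I) = f ω := by ring
    rw [h7] at h6
    linarith
  have hsub : Integrable (fun ω => f ω - I) P := hint.sub (integrable_const _)
  have hlin : Integrable (fun ω => Real.exp I + Real.exp I * (f ω - I)) P :=
    (integrable_const _).add (hsub.const_mul _)
  have h8a := integral_add (μ := P) (f := fun _ => Real.exp I)
    (g := fun ω => Real.exp I * (f ω - I)) (integrable_const _) (hsub.const_mul _)
  have h8b := integral_const_mul (μ := P) (Real.exp I) (fun ω => f ω - I)
  have h8c := integral_sub (μ := P) (f := f) (g := fun _ => I) hint (integrable_const _)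
  have h8 : ∫ ω, (Real.exp I + Real.exp I * (f ω - I)) ∂P = Real.exp I := by
    rw [h8a, h8b, h8c, integral_const, integral_const]
    simp [measure_univ, ← hIdef]
  calc Real.exp I = ∫ ω, (Real.exp I + Real.exp I * (f ω - I)) ∂P := h8.symm
    _ ≤ ∫ ω, Real.exp (f ω) ∂P := integral_mono hlin hexp hpt

set_option maxHeartbeats 1000000 in
/-- **Weighted Massart finite-class lemma.**  Let `J ⊆ ℝ^n` be a finite nonempty set with
`r = max_{x ∈ J} ‖x‖`.  Let `σ_1, …, σ_n, w_1, …, w_n` be mutually independent random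
variables, the `σ_i` Rademacher (uniform on `{−1, 1}`) and the `w_i` taking values in
`[−B, B]` almost surely.  Then
`E[max_{x ∈ J} ∑ i, σ_i x_i w_i] ≤ r B √(2 log |J|)`. -/
theorem weighted_massart {n : ℕ} (hn : 1 ≤ n) (B : ℝ) (hB : 0 < B)
    (J : Finset (Fin n → ℝ)) (hJ : J.Nonempty)
    (r : ℝ) (hr : r = J.sup' hJ fun x => Real.sqrt (x ⬝ᵥ x))
    {Ω : Type*} [MeasurableSpace Ω] (P : Measure Ω) [IsProbabilityMeasure P]
    (σ w : Fin n → Ω → ℝ)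
    (hσm : ∀ i, Measurable (σ i)) (hwm : ∀ i, Measurable (w i))
    (hindep : iIndepFun (Sum.elim σ w) P)
    (hσ : ∀ i, P.map (σ i) =
      ((1 : ℝ≥0∞) / 2) • Measure.dirac (1 : ℝ) + ((1 : ℝ≥0∞) / 2) • Measure.dirac (-1 : ℝ))
    (hw : ∀ i, ∀ᵐ ω ∂P, |w i ω| ≤ B) :
    ∫ ω, (J.sup' hJ fun x => ∑ i, σ i ω * x i * w i ω) ∂P
      ≤ r * B * Real.sqrt (2 * Real.log J.card) := by
  classical
  have hσae : ∀ᵐ ω ∂P, ∀ i, σ i ω = 1 ∨ σ i ω = -1 :=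
    ae_all_iff.2 fun i => wm_rad_ae (hσm i) (hσ i)
  have hwae : ∀ᵐ ω ∂P, ∀ i, |w i ω| ≤ B := ae_all_iff.2 hw
  have hSm : ∀ x : Fin n → ℝ, Measurable (fun ω => ∑ i, σ i ω * x i * w i ω) :=
    fun x => Finset.measurable_sum _ fun i _ => ((hσm i).mul_const _).mul (hwm i)
  set M : Ω → ℝ := fun ω => J.sup' hJ fun x => ∑ i, σ i ω * x i * w i ω with hMdef
  set C : ℝ := J.sup' hJ (fun x => ∑ i, |x i| * B) with hCdef
  have hSb : ∀ᵐ ω ∂P, ∀ x ∈ J, |∑ i, σ i ω * x i * w i ω| ≤ C := by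
    filter_upwards [hσae, hwae] with ω h1 h2
    intro x hx
    calc |∑ i, σ i ω * x i * w i ω| ≤ ∑ i, |σ i ω * x i * w i ω| :=
          Finset.abs_sum_le_sum_abs _ _
      _ ≤ ∑ i, |x i| * B := by
          apply Finset.sum_le_sum; intro i _
          have hs1 : |σ i ω| = 1 := by rcases h1 i with h | h <;> simp [h]
          rw [abs_mul, abs_mul, hs1, one_mul]
          exact mul_le_mul_of_nonneg_left (h2 i) (abs_nonneg _)
      _ ≤ C := Finset.le_sup' (fun x => ∑ i, |x i| * B) hx
  have hMm : Measurable M := by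
    have h1 := Finset.measurable_sup' hJ
      (f := fun (x : Fin n → ℝ) (ω : Ω) => ∑ i, σ i ω * x i * w i ω) (fun x _ => hSm x)
    have h2 : M = J.sup' hJ (fun (x : Fin n → ℝ) (ω : Ω) => ∑ i, σ i ω * x i * w i ω) := by
      funext ω
      exact (Finset.sup'_apply hJ (fun (x : Fin n → ℝ) (ω : Ω) => ∑ i, σ i ω * x i * w i ω) ω).symm
    rw [h2]; exact h1
  have hMb : ∀ᵐ ω ∂P, |M ω| ≤ C := by
    filter_upwards [hSb] with ω h
    obtain ⟨x₀, hx₀, hEq⟩ := Finset.exists_mem_eq_sup' hJ (fun x => ∑ i, σ i ω * x i * w i ω)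
    show |J.sup' hJ fun x => ∑ i, σ i ω * x i * w i ω| ≤ C
    rw [hEq]
    exact h x₀ hx₀
  have hMint : Integrable M P := wm_integrable_of_ae_bdd hMm hMb
  have hr0 : 0 ≤ r := by
    obtain ⟨x₀, hx₀⟩ := hJ
    refine (Real.sqrt_nonneg (x₀ ⬝ᵥ x₀)).trans ?_
    rw [hr]
    exact Finset.le_sup' (fun x => Real.sqrt (x ⬝ᵥ x)) hx₀
  have hcard1 : (1 : ℝ) ≤ (J.card : ℝ) := by exact_mod_cast hJ.card_pos
  have hlog0 : 0 ≤ Real.log (J.card : ℝ) := Real.log_nonneg hcard1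
  have key : ∀ t : ℝ, 0 < t →
      ∫ ω, M ω ∂P ≤ Real.log (J.card : ℝ) / t + t * (B ^ 2 * r ^ 2) / 2 := by
    intro t ht
    have hmgf : ∀ x ∈ J, ∫ ω, Real.exp (t * ∑ i, σ i ω * x i * w i ω) ∂P
        ≤ Real.exp (t ^ 2 * (B ^ 2 * r ^ 2) / 2) := by
      intro x hx
      have h1 : (fun ω => Real.exp (t * ∑ i, σ i ω * x i * w i ω))
          = fun ω => ∏ i, Real.exp (σ i ω * (t * x i) * w i ω) := by
        funext ω
        rw [← Real.exp_sum, Finset.mul_sum]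
        congr 1
        exact Finset.sum_congr rfl fun i _ => by ring
      have hxr : ∑ i, x i * x i ≤ r ^ 2 := by
        have h2 : Real.sqrt (x ⬝ᵥ x) ≤ r := by
          rw [hr]; exact Finset.le_sup' (fun x => Real.sqrt (x ⬝ᵥ x)) hx
        have hnn : (0 : ℝ) ≤ ∑ i, x i * x i :=
          Finset.sum_nonneg fun i _ => mul_self_nonneg _
        have hdot : x ⬝ᵥ x = ∑ i, x i * x i := rfl
        calc ∑ i, x i * x i = Real.sqrt (x ⬝ᵥ x) ^ 2 := by
              rw [Real.sq_sqrt (hdot ▸ hnn), hdot]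
          _ ≤ r ^ 2 := pow_le_pow_left₀ (Real.sqrt_nonneg _) h2 2
      calc ∫ ω, Real.exp (t * ∑ i, σ i ω * x i * w i ω) ∂P
          = ∫ ω, ∏ i, Real.exp (σ i ω * (t * x i) * w i ω) ∂P := by rw [h1]
        _ ≤ ∏ i, Real.exp ((t * x i) ^ 2 * B ^ 2 / 2) :=
            wm_prod_mgf hB σ w hσm hwm hindep hσ hw (fun i => t * x i) Finset.univ
        _ = Real.exp (∑ i, (t * x i) ^ 2 * B ^ 2 / 2) := (Real.exp_sum _ _).symm
        _ ≤ Real.exp (t ^ 2 * (B ^ 2 * r ^ 2) / 2) := by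
            apply Real.exp_le_exp.2
            have h3 : ∑ i, (t * x i) ^ 2 * B ^ 2 / 2 = t ^ 2 * B ^ 2 / 2 * ∑ i, x i * x i := by
              rw [Finset.mul_sum]
              exact Finset.sum_congr rfl fun i _ => by ring
            rw [h3]
            have h4 : t ^ 2 * B ^ 2 / 2 * ∑ i, x i * x i ≤ t ^ 2 * B ^ 2 / 2 * r ^ 2 :=
              mul_le_mul_of_nonneg_left hxr (by positivity)
            linarith
    have hexpSint : ∀ x ∈ J, Integrable (fun ω => Real.exp (t * ∑ i, σ i ω * x i * w i ω)) P := by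
      intro x hx
      have hm1 : Measurable (fun ω => Real.exp (t * ∑ i, σ i ω * x i * w i ω)) :=
        Real.measurable_exp.comp ((hSm x).const_mul t)
      apply wm_integrable_of_ae_bdd hm1 (C := Real.exp (t * C))
      filter_upwards [hSb] with ω h
      rw [abs_of_pos (Real.exp_pos _)]
      apply Real.exp_le_exp.2
      exact mul_le_mul_of_nonneg_left ((le_abs_self _).trans (h x hx)) ht.le
    have hexpMint : Integrable (fun ω => Real.exp (t * M ω)) P := by
      have hm2 : Measurable (fun ω => Real.exp (t * M ω)) :=
        Real.measurable_exp.comp (hMm.const_mul t)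
      apply wm_integrable_of_ae_bdd hm2 (C := Real.exp (t * C))
      filter_upwards [hMb] with ω h
      rw [abs_of_pos (Real.exp_pos _)]
      exact Real.exp_le_exp.2 (mul_le_mul_of_nonneg_left ((le_abs_self _).trans h) ht.le)
    set I : ℝ := ∫ ω, M ω ∂P with hIdef
    have hjen : Real.exp (t * I) ≤ ∫ ω, Real.exp (t * M ω) ∂P := by
      have h0 : t * I = ∫ ω, t * M ω ∂P := by
        rw [hIdef, integral_const_mul]
      rw [h0]
      exact wm_jensen_exp (hMint.const_mul t) hexpMint
    have hsum : ∫ ω, Real.exp (t * M ω) ∂P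
        ≤ ∑ x ∈ J, ∫ ω, Real.exp (t * ∑ i, σ i ω * x i * w i ω) ∂P := by
      rw [← integral_finset_sum J hexpSint]
      apply integral_mono hexpMint (integrable_finset_sum J hexpSint)
      intro ω
      obtain ⟨x₀, hx₀, hEq⟩ := Finset.exists_mem_eq_sup' hJ (fun x => ∑ i, σ i ω * x i * w i ω)
      show Real.exp (t * (J.sup' hJ fun x => ∑ i, σ i ω * x i * w i ω)) ≤ _
      rw [hEq]
      exact Finset.single_le_sum (fun x _ => (Real.exp_pos (t * ∑ i, σ i ω * x i * w i ω)).le) hx₀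
    have htotal : Real.exp (t * I) ≤ (J.card : ℝ) * Real.exp (t ^ 2 * (B ^ 2 * r ^ 2) / 2) := by
      refine hjen.trans (hsum.trans ?_)
      calc ∑ x ∈ J, ∫ ω, Real.exp (t * ∑ i, σ i ω * x i * w i ω) ∂P
          ≤ ∑ _x ∈ J, Real.exp (t ^ 2 * (B ^ 2 * r ^ 2) / 2) := Finset.sum_le_sum hmgf
        _ = (J.card : ℝ) * Real.exp (t ^ 2 * (B ^ 2 * r ^ 2) / 2) := by
            rw [Finset.sum_const, nsmul_eq_mul]
    have hcardpos : (0 : ℝ) < (J.card : ℝ) := by linarith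
    have hlog : t * I ≤ Real.log (J.card : ℝ) + t ^ 2 * (B ^ 2 * r ^ 2) / 2 := by
      have h9 := (Real.le_log_iff_exp_le (by positivity)).2 htotal
      rwa [Real.log_mul (ne_of_gt hcardpos) (Real.exp_ne_zero _), Real.log_exp] at h9
    rw [div_add_div _ _ (ne_of_gt ht) (two_ne_zero), le_div_iff₀ (by positivity)]
    nlinarith [hlog]
  have hfin := wm_opt_t hlog0 (by positivity : (0 : ℝ) ≤ B ^ 2 * r ^ 2) key
  have hsq : Real.sqrt (2 * Real.log (J.card : ℝ) * (B ^ 2 * r ^ 2))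
      = r * B * Real.sqrt (2 * Real.log (J.card : ℝ)) := by
    rw [show 2 * Real.log (J.card : ℝ) * (B ^ 2 * r ^ 2)
        = (r * B) ^ 2 * (2 * Real.log (J.card : ℝ)) by ring,
      Real.sqrt_mul (sq_nonneg _), Real.sqrt_sq (by positivity : (0 : ℝ) ≤ r * B)]
  rw [hsq] at hfin
  exact hfin
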